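/- Let M be an n×n complex matrix whose Hermitian part H = (M + M†)/2 is positive semidefinite with the eigenvalue 0 having multiplicity μ. Then for every Hermitian positive definite matrix T, the sum of the geometric multiplicities of the eigenvalues of MT having zero real part is at most μ. -/

import Mathlib

open Matrix ComplexOrder

open Module in
lemma aux_sum_finrank_le {K V : Type*} [Field K] [AddCommGroup V] [Module K V]
    [FiniteDimensional K V] {ι : Type*} {E : ι → Submodule K V} (hE : iSupIndep E)
    (S : Finset ι) :
    ∑ l ∈ S, finrank K (E l) ≤ finrank K ↥(⨆ l ∈ S, E l) := by
  classical
  induction S using Finset.induction_on with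
  | empty => simp
  | @insert a s ha ih =>
    rw [Finset.sum_insert ha]
    have hd' : Disjoint (E a) (⨆ l ∈ s, E l) := by
      simpa using hE.disjoint_biSup (x := a) (y := (s : Set ι)) (by simpa using ha)
    have key := Submodule.finrank_sup_add_finrank_inf_eq (E a) (⨆ l ∈ s, E l)
    rw [hd'.eq_bot, finrank_bot, add_zero] at key
    calc finrank K (E a) + ∑ l ∈ s, finrank K (E l)
        ≤ finrank K (E a) + finrank K ↥(⨆ l ∈ s, E l) := by omega
      _ = finrank K ↥(E a ⊔ ⨆ l ∈ s, E l) := key.symm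
      _ = finrank K ↥(⨆ l ∈ insert a s, E l) := by
          rw [Finset.iSup_insert]

/-- if the Hermitian part `H = (M + Mᴴ)/2` of `M` is positive
semidefinite with `0` of multiplicity `μ` (the dimension of the kernel of `H`),
then for every Hermitian positive definite `T`, the sum of the geometric
multiplicities of the eigenvalues of `M * T` with zero real part is at most `μ`. -/
theorem stmt8 {n : ℕ} (M T : Matrix (Fin n) (Fin n) ℂ)
    (hH : ((1 / 2 : ℂ) • (M + Mᴴ)).PosSemidef)
    (μ : ℕ)
    (hμ : μ = Module.finrank ℂ
      (LinearMap.ker ((1 / 2 : ℂ) • (M + Mᴴ)).mulVecLin))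
    (hT : T.PosDef)
    (S : Finset ℂ) (hS : ∀ l ∈ S, l.re = 0) :
    ∑ l ∈ S, Module.finrank ℂ (Module.End.eigenspace (M * T).mulVecLin l) ≤ μ := by
  classical
  set H : Matrix (Fin n) (Fin n) ℂ := (1 / 2 : ℂ) • (M + Mᴴ) with hHdef
  set f : Module.End ℂ (Fin n → ℂ) := (M * T).mulVecLin with hfdef
  set E : ℂ → Submodule ℂ (Fin n → ℂ) := f.eigenspace with hEdef
  -- T is injective as a linear map
  have hTinj : Function.Injective T.mulVecLin := by
    intro x y hxy
    simp only [mulVecLin_apply] at hxy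
    haveI : Invertible T := hT.isUnit.invertible
    exact (Matrix.mulVec_injective_of_invertible T) hxy
  -- each eigenspace for l ∈ S maps into ker H under T
  have hmap : ∀ l ∈ S, (E l).map T.mulVecLin ≤ LinearMap.ker H.mulVecLin := by
    intro l hl
    rintro _ ⟨x, hx, rfl⟩
    have hx' : (M * T) *ᵥ x = l • x := by
      have := Module.End.mem_eigenspace_iff.mp hx
      simpa [hfdef, mulVecLin_apply] using this
    set y : Fin n → ℂ := T *ᵥ x with hy
    set r : ℂ := star x ⬝ᵥ (T *ᵥ x) with hr
    set z : ℂ := star y ⬝ᵥ (M *ᵥ y) with hzdef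
    -- r is nonnegative real
    have hrim : r.im = 0 := by
      by_cases hx0 : x = 0
      · simp [hr, hx0]
      · have := hT.dotProduct_mulVec_pos hx0
        rw [Complex.lt_def] at this
        exact this.2.symm
    -- compute z = l * r
    have hz : z = l * r := by
      have h1 : z = star x ⬝ᵥ (Tᴴ *ᵥ (M *ᵥ (T *ᵥ x))) := by
        rw [hzdef, hy, star_mulVec, ← dotProduct_mulVec]
      have h2 : Tᴴ *ᵥ (M *ᵥ (T *ᵥ x)) = l • (T *ᵥ x) := by
        have hmt : M *ᵥ (T *ᵥ x) = l • x := by rw [mulVec_mulVec, hx']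
        rw [hmt, mulVec_smul, hT.isHermitian.eq]
      rw [h1, h2, dotProduct_smul, smul_eq_mul, hr]
    have hzre : z.re = 0 := by
      rw [hz, Complex.mul_re, hS l hl, hrim]
      ring
    -- conjugate of z
    have hconj : star y ⬝ᵥ (Mᴴ *ᵥ y) = star z := by
      rw [hzdef, star_dotProduct, star_mulVec,
        conjTranspose_conjTranspose, ← dotProduct_mulVec]
    -- quadratic form of H vanishes at y
    have hHy : star y ⬝ᵥ (H *ᵥ y) = 0 := by
      rw [hHdef, smul_mulVec, dotProduct_smul, add_mulVec, dotProduct_add,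
        ← hzdef, hconj]
      rw [Complex.star_def, Complex.add_conj, hzre]
      simp
    have hker : H *ᵥ y = 0 := (hH.dotProduct_mulVec_zero_iff y).mp hHy
    simp only [LinearMap.mem_ker, mulVecLin_apply]
    exact hker
  -- the sup of eigenspaces maps into ker H
  have hWmap : (⨆ l ∈ S, E l).map T.mulVecLin ≤ LinearMap.ker H.mulVecLin := by
    rw [Submodule.map_iSup]
    apply iSup_le
    intro l
    rw [Submodule.map_iSup]
    apply iSup_le
    intro hl
    exact hmap l hl
  have hInd : iSupIndep E := f.eigenspaces_iSupIndep
  have h1 := aux_sum_finrank_le hInd S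
  have h2 : Module.finrank ℂ ↥(⨆ l ∈ S, E l)
      = Module.finrank ℂ ↥((⨆ l ∈ S, E l).map T.mulVecLin) :=
    LinearEquiv.finrank_eq (Submodule.equivMapOfInjective T.mulVecLin hTinj _)
  have h3 : Module.finrank ℂ ↥((⨆ l ∈ S, E l).map T.mulVecLin)
      ≤ Module.finrank ℂ (LinearMap.ker H.mulVecLin) :=
    Submodule.finrank_mono hWmap
  calc ∑ l ∈ S, Module.finrank ℂ (E l)
      ≤ Module.finrank ℂ ↥(⨆ l ∈ S, E l) := h1
    _ = Module.finrank ℂ ↥((⨆ l ∈ S, E l).map T.mulVecLin) := h2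
    _ ≤ Module.finrank ℂ (LinearMap.ker H.mulVecLin) := h3
    _ = μ := hμ.symm
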